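/- Let f⁽¹⁾, f⁽²⁾ ∈ ℝ₊ᴺ with ‖f⁽¹⁾ − f⁽²⁾‖_∞ ≤ 1/3, ∑ᵢ fᵢ⁽¹⁾ Δvᵢ = ∑ᵢ Δvᵢ, and set β₁ = 3‖f⁽¹⁾ − f⁽²⁾‖_∞ and f⁽³⁾ = f⁽¹⁾ + β₁(1 − f⁽¹⁾). Then: (1) for every k with f_k⁽¹⁾ < 2/3 one has h(f_k⁽³⁾) ≤ h(f_k⁽²⁾); (2) for every k with f_k⁽¹⁾ ≥ 2/3 one has f_k⁽³⁾ ≥ 2/3; (3) ‖f⁽³⁾ − f⁽¹⁾‖_∞ ≤ 3‖f⁽¹⁾‖_∞ ‖f⁽¹⁾ − f⁽²⁾‖_∞. -/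

import Mathlib

lemma h_anti_aux {x y : ℝ} (hy : 0 ≤ y) (hyx : y ≤ x) (hx : x ≤ 1) :
    x * Real.log x - x ≤ y * Real.log y - y := by
  rcases eq_or_lt_of_le hy with h0 | hy'
  · rw [← h0]
    have hx0 : 0 ≤ x := le_trans hy hyx
    have hlog : Real.log x ≤ 0 := Real.log_nonpos hx0 hx
    have : x * Real.log x ≤ 0 := mul_nonpos_of_nonneg_of_nonpos hx0 hlog
    simp
    nlinarith
  · have hder : ∀ t : ℝ, 0 < t →
        HasDerivAt (fun t : ℝ => t * Real.log t - t) (Real.log t) t := by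
      intro t ht0
      have h1 : HasDerivAt (fun t : ℝ => t * Real.log t)
          (1 * Real.log t + t * t⁻¹) t :=
        (hasDerivAt_id t).mul (Real.hasDerivAt_log ht0.ne')
      have h2 := h1.sub (hasDerivAt_id t)
      have e : 1 * Real.log t + t * t⁻¹ - 1 = Real.log t := by
        rw [mul_inv_cancel₀ ht0.ne']; ring
      rw [e] at h2
      exact h2
    have hanti : AntitoneOn (fun t => t * Real.log t - t) (Set.Icc y x) := by
      apply antitoneOn_of_deriv_nonpos (convex_Icc y x)
      · apply ContinuousOn.sub _ continuousOn_id
        exact continuousOn_id.mul (Real.continuousOn_log.mono (by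
          intro t ht
          simp only [Set.mem_compl_iff, Set.mem_singleton_iff]
          exact (lt_of_lt_of_le hy' ht.1).ne'))
      · intro t ht
        rw [interior_Icc] at ht
        exact ((hder t (lt_trans hy' ht.1)).differentiableAt.differentiableWithinAt)
      · intro t ht
        rw [interior_Icc] at ht
        have ht0 : 0 < t := lt_trans hy' ht.1
        rw [(hder t ht0).deriv]
        exact Real.log_nonpos ht0.le (le_trans ht.2.le hx)
    exact hanti (Set.mem_Icc.mpr ⟨le_refl y, hyx⟩) (Set.mem_Icc.mpr ⟨hyx, le_refl x⟩)
      hyx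

/-- Lemma 3.5: properties of the regularized vector
`f3 = f1 + β₁ (1 - f1)` with `β₁ = 3 ‖f1 - f2‖_∞`. -/
theorem inf_perturb_properties
    (N : ℕ) (hN : 0 < N) (Δv f1 f2 : Fin N → ℝ)
    (hΔv : ∀ i, 0 < Δv i) (hf1 : ∀ i, 0 ≤ f1 i) (hf2 : ∀ i, 0 ≤ f2 i)
    (hdiff : (⨆ i, |f1 i - f2 i|) ≤ 1 / 3)
    (hmass : (∑ i, f1 i * Δv i) = ∑ i, Δv i) :
    (∀ k, f1 k < 2 / 3 →
        ((f1 k + 3 * (⨆ i, |f1 i - f2 i|) * (1 - f1 k)) *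
            Real.log (f1 k + 3 * (⨆ i, |f1 i - f2 i|) * (1 - f1 k)) -
          (f1 k + 3 * (⨆ i, |f1 i - f2 i|) * (1 - f1 k))) ≤
        (f2 k * Real.log (f2 k) - f2 k)) ∧
    (∀ k, 2 / 3 ≤ f1 k → 2 / 3 ≤ f1 k + 3 * (⨆ i, |f1 i - f2 i|) * (1 - f1 k)) ∧
    ((⨆ k, |(f1 k + 3 * (⨆ i, |f1 i - f2 i|) * (1 - f1 k)) - f1 k|) ≤
      3 * (⨆ i, f1 i) * (⨆ i, |f1 i - f2 i|)) := by
  haveI : Nonempty (Fin N) := ⟨⟨0, hN⟩⟩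
  set s := ⨆ i, |f1 i - f2 i| with hs_def
  have hbdd : BddAbove (Set.range fun i => |f1 i - f2 i|) :=
    Set.Finite.bddAbove (Set.finite_range _)
  have hbdd1 : BddAbove (Set.range f1) := Set.Finite.bddAbove (Set.finite_range _)
  have hsle : ∀ k, |f1 k - f2 k| ≤ s := fun k => le_ciSup hbdd k
  have hs0 : 0 ≤ s := le_trans (abs_nonneg _) (hsle (Classical.arbitrary _))
  set M := ⨆ i, f1 i with hM_def
  have hMle : ∀ k, f1 k ≤ M := fun k => le_ciSup hbdd1 k
  have hM1 : 1 ≤ M := by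
    by_contra h
    push_neg at h
    have hsum : ∑ i, f1 i * Δv i ≤ ∑ i, M * Δv i :=
      Finset.sum_le_sum (fun i _ => mul_le_mul_of_nonneg_right (hMle i) (hΔv i).le)
    rw [hmass, ← Finset.mul_sum] at hsum
    have hΔpos : 0 < ∑ i, Δv i :=
      Finset.sum_pos (fun i _ => hΔv i) Finset.univ_nonempty
    nlinarith
  refine ⟨fun k hk => ?_, fun k hk => ?_, ?_⟩
  · -- part 1
    have h1 : |f1 k - f2 k| ≤ s := hsle k
    have h2 : f2 k ≤ f1 k + 3 * s * (1 - f1 k) := by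
      have := abs_le.mp h1
      nlinarith
    have h3 : f1 k + 3 * s * (1 - f1 k) ≤ 1 := by nlinarith
    exact h_anti_aux (hf2 k) h2 h3
  · -- part 2
    nlinarith
  · -- part 3
    apply ciSup_le
    intro k
    have h1 : |f1 k + 3 * s * (1 - f1 k) - f1 k| = 3 * s * |1 - f1 k| := by
      rw [show f1 k + 3 * s * (1 - f1 k) - f1 k = 3 * s * (1 - f1 k) by ring,
        abs_mul, abs_of_nonneg (by positivity : (0:ℝ) ≤ 3 * s)]
    rw [h1]
    have h2 : |1 - f1 k| ≤ M :=
      abs_le.mpr ⟨by nlinarith [hMle k], by nlinarith [hf1 k]⟩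
    nlinarith
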